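/- For a word t = t_1⋯t_n over alphabet A and a pattern p = p_1⋯p_k, define f_i(m) for 0 ≤ m ≤ n and 1 ≤ i ≤ k as the minimal l ≤ m such that p_1⋯p_i is a subsequence of the length-l suffix of t_1⋯t_m, and f_i(m) = ∞ (no such l exists) otherwise. Then f_i satisfies the recurrence: f_i(0) = ∞ for all i, and for m ≥ 1, f_i(m) = f_{i−1}(m−1) + 1 if t_m = p_i (with f_0 ≡ 0), and f_i(m) = f_i(m−1) + 1 otherwise (with ∞ + 1 = ∞), where in the case t_m = p_i one takes the minimum of the two expressions; moreover p is an episode of t in a w-window with that window ending at position m if and only if f_k(m) ≤ w. -/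

import Mathlib

section helpers

lemma sInf_image_le_iff (S : Set ℕ) (w : ℕ) :
    sInf ((fun l : ℕ => (l : ℕ∞)) '' S) ≤ (w : ℕ∞) ↔ ∃ l ∈ S, l ≤ w := by
  constructor
  · intro h
    rcases S.eq_empty_or_nonempty with rfl | hS
    · simp at h
    · have h1 : ((sInf S : ℕ) : ℕ∞) ≤ sInf ((fun l : ℕ => (l : ℕ∞)) '' S) := by
        apply le_sInf
        rintro x ⟨l, hl, rfl⟩
        exact Nat.cast_le.2 (Nat.sInf_le hl)
      exact ⟨sInf S, Nat.sInf_mem hS, Nat.cast_le.1 (h1.trans h)⟩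
  · rintro ⟨l, hl, hlw⟩
    exact le_trans (sInf_le ⟨l, hl, rfl⟩) (Nat.cast_le.2 hlw)

lemma sInf_image_add_one_le_iff (S : Set ℕ) (w : ℕ) :
    sInf ((fun l : ℕ => (l : ℕ∞)) '' S) + 1 ≤ (w : ℕ∞) ↔ ∃ l ∈ S, l + 1 ≤ w := by
  constructor
  · intro h
    have h0 : sInf ((fun l : ℕ => (l : ℕ∞)) '' S) ≤ (w : ℕ∞) :=
      le_trans le_self_add h
    obtain ⟨l, hl, -⟩ := (sInf_image_le_iff S w).1 h0
    have hS : S.Nonempty := ⟨l, hl⟩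
    have h1 : ((sInf S : ℕ) : ℕ∞) ≤ sInf ((fun l : ℕ => (l : ℕ∞)) '' S) := by
      apply le_sInf
      rintro x ⟨l', hl', rfl⟩
      exact Nat.cast_le.2 (Nat.sInf_le hl')
    have h2 : ((sInf S + 1 : ℕ) : ℕ∞) ≤ (w : ℕ∞) := by
      push_cast
      exact le_trans (add_le_add h1 le_rfl) h
    exact ⟨sInf S, Nat.sInf_mem hS, Nat.cast_le.1 h2⟩
  · rintro ⟨l, hl, hlw⟩
    have h3 : sInf ((fun l : ℕ => (l : ℕ∞)) '' S) ≤ (l : ℕ∞) := sInf_le ⟨l, hl, rfl⟩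
    calc sInf ((fun l : ℕ => (l : ℕ∞)) '' S) + 1 ≤ (l : ℕ∞) + 1 := add_le_add h3 le_rfl
      _ = ((l + 1 : ℕ) : ℕ∞) := by push_cast; rfl
      _ ≤ (w : ℕ∞) := Nat.cast_le.2 hlw

lemma enat_eq_of_forall_nat_le_iff {a b : ℕ∞} (h : ∀ n : ℕ, a ≤ n ↔ b ≤ n) : a = b := by
  apply le_antisymm
  · cases b with
    | top => exact le_top
    | coe n => exact (h n).2 le_rfl
  · cases a with
    | top => exact le_top
    | coe n => exact (h n).1 le_rfl

lemma sublist_append_singleton {A : Type*} {s u : List A} {a : A} (h : s.Sublist (u ++ [a])) :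
    s.Sublist u ∨ ∃ s', s = s' ++ [a] ∧ s'.Sublist u := by
  have h' : s.reverse.Sublist (a :: u.reverse) := by
    simpa using h.reverse
  rcases List.sublist_cons_iff.1 h' with h2 | ⟨r, hr, h2⟩
  · left; simpa using h2.reverse
  · right
    refine ⟨r.reverse, ?_, by simpa using h2.reverse⟩
    have := congrArg List.reverse hr
    simpa using this

lemma drop_sublist_drop {A : Type*} (l : List A) {k k' : ℕ} (h : k ≤ k') :
    (l.drop k').Sublist (l.drop k) := by
  have h1 : l.drop k' = (l.drop k).drop (k' - k) := by
    rw [List.drop_drop]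
    congr 1
    omega
  rw [h1]
  exact List.drop_sublist _ _

end helpers

theorem episode_automaton_invariant {A : Type*} [DecidableEq A] (t p : List A)
    (f : ℕ → ℕ → ℕ∞)
    (hf : ∀ i m : ℕ, f i m = sInf {x : ℕ∞ | ∃ l : ℕ, x = (l : ℕ∞) ∧ l ≤ m ∧
        List.Sublist (p.take i) ((t.take m).drop (m - l))}) :
    (∀ i : ℕ, 1 ≤ i → i ≤ p.length → f i 0 = ⊤) ∧
    (∀ i m : ℕ, 1 ≤ i → i ≤ p.length → 1 ≤ m → m ≤ t.length →
      f i m = if t[m - 1]? = p[i - 1]? then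
          min (f (i - 1) (m - 1) + 1) (f i (m - 1) + 1)
        else f i (m - 1) + 1) ∧
    (∀ m w : ℕ, m ≤ t.length →
      (List.Sublist p ((t.take m).drop (m - w)) ↔ f p.length m ≤ (w : ℕ∞))) := by
  have hf' : ∀ i m : ℕ, f i m = sInf ((fun l : ℕ => (l : ℕ∞)) ''
      {l : ℕ | l ≤ m ∧ List.Sublist (p.take i) ((t.take m).drop (m - l))}) := by
    intro i m
    rw [hf i m]
    congr 1
    ext x
    constructor
    · rintro ⟨l, rfl, h1, h2⟩; exact ⟨l, ⟨h1, h2⟩, rfl⟩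
    · rintro ⟨l, ⟨h1, h2⟩, rfl⟩; exact ⟨l, rfl, h1, h2⟩
  have key : ∀ i m w : ℕ, (f i m ≤ (w : ℕ∞) ↔
      ∃ l : ℕ, (l ≤ m ∧ List.Sublist (p.take i) ((t.take m).drop (m - l))) ∧ l ≤ w) := by
    intro i m w
    rw [hf']
    exact sInf_image_le_iff _ w
  have key1 : ∀ i m w : ℕ, (f i m + 1 ≤ (w : ℕ∞) ↔
      ∃ l : ℕ, (l ≤ m ∧ List.Sublist (p.take i) ((t.take m).drop (m - l))) ∧ l + 1 ≤ w) := by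
    intro i m w
    rw [hf']
    exact sInf_image_add_one_le_iff _ w
  refine ⟨?_, ?_, ?_⟩
  · -- f i 0 = ⊤
    intro i hi1 hip
    rw [hf']
    convert sInf_empty
    · rfl
    rw [Set.image_eq_empty]
    ext l
    simp only [Set.mem_setOf_eq, Set.mem_empty_iff_false, iff_false, not_and]
    intro hl
    interval_cases l
    simp only [List.take_zero, List.drop_nil, Nat.sub_zero]
    intro h
    have hne : p.take i ≠ [] := by
      intro h'
      have := congrArg List.length h'
      simp [Nat.min_eq_left hip] at this
      omega
    exact hne (List.sublist_nil.1 h)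
  · -- recurrence
    intro i m hi1 hip hm1 hmt
    obtain ⟨a, hta⟩ : ∃ a, t[m-1]? = some a :=
      ⟨_, List.getElem?_eq_getElem (by omega)⟩
    obtain ⟨b, hpb⟩ : ∃ b, p[i-1]? = some b :=
      ⟨_, List.getElem?_eq_getElem (by omega)⟩
    have htake_t : t.take m = t.take (m-1) ++ [a] := by
      conv_lhs => rw [show m = (m-1) + 1 by omega]
      rw [List.take_succ, hta]
      rfl
    have htake_p : p.take i = p.take (i-1) ++ [b] := by
      conv_lhs => rw [show i = (i-1) + 1 by omega]
      rw [List.take_succ, hpb]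
      rfl
    have hlen_t : (t.take (m-1)).length = m - 1 := by
      rw [List.length_take]; omega
    have hpi_ne : p.take i ≠ [] := by
      intro h'
      have := congrArg List.length h'
      simp [Nat.min_eq_left hip] at this
      omega
    have hdropgen : ∀ l : ℕ, 1 ≤ l → l ≤ m → (t.take m).drop (m - l) =
        (t.take (m-1)).drop ((m-1) - (l-1)) ++ [a] := by
      intro l hl1 hlm
      rw [htake_t, List.drop_append_of_le_length (by rw [hlen_t]; omega)]
      congr 2
      omega
    apply enat_eq_of_forall_nat_le_iff
    intro w
    rw [key i m w]
    by_cases hcase : t[m - 1]? = p[i - 1]?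
    · rw [if_pos hcase]
      have heq : a = b := by
        rw [hta, hpb] at hcase
        exact Option.some.inj hcase
      rw [min_le_iff, key1 (i-1) (m-1) w, key1 i (m-1) w]
      constructor
      · rintro ⟨l, ⟨hlm, hsub⟩, hlw⟩
        have hl1 : 1 ≤ l := by
          by_contra hc
          have : l = 0 := by omega
          subst this
          rw [Nat.sub_zero, List.drop_eq_nil_of_le (by simp)] at hsub
          exact hpi_ne (List.sublist_nil.1 hsub)
        rw [hdropgen l hl1 hlm] at hsub
        rcases sublist_append_singleton hsub with h2 | ⟨s', hs', h2⟩
        · right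
          exact ⟨l - 1, ⟨by omega, h2⟩, by omega⟩
        · left
          have hs'' : s' = p.take (i-1) := by
            rw [htake_p, heq] at hs'
            exact (List.append_inj_left' hs'.symm rfl)
          subst hs''
          exact ⟨l - 1, ⟨by omega, h2⟩, by omega⟩
      · rintro (⟨l, ⟨hlm, hsub⟩, hlw⟩ | ⟨l, ⟨hlm, hsub⟩, hlw⟩)
        · refine ⟨l + 1, ⟨by omega, ?_⟩, hlw⟩
          rw [hdropgen (l+1) (by omega) (by omega)]
          simp only [Nat.add_sub_cancel]
          rw [htake_p, heq]
          exact hsub.append (List.Sublist.refl _)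
        · refine ⟨l + 1, ⟨by omega, ?_⟩, hlw⟩
          rw [hdropgen (l+1) (by omega) (by omega)]
          simp only [Nat.add_sub_cancel]
          exact hsub.trans (List.sublist_append_left _ _)
    · rw [if_neg hcase]
      have hne : a ≠ b := by
        intro h
        exact hcase (by rw [hta, hpb, h])
      rw [key1 i (m-1) w]
      constructor
      · rintro ⟨l, ⟨hlm, hsub⟩, hlw⟩
        have hl1 : 1 ≤ l := by
          by_contra hc
          have : l = 0 := by omega
          subst this
          rw [Nat.sub_zero, List.drop_eq_nil_of_le (by simp)] at hsub
          exact hpi_ne (List.sublist_nil.1 hsub)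
        rw [hdropgen l hl1 hlm] at hsub
        rcases sublist_append_singleton hsub with h2 | ⟨s', hs', h2⟩
        · exact ⟨l - 1, ⟨by omega, h2⟩, by omega⟩
        · exfalso
          apply hne
          rw [htake_p] at hs'
          have h3 : [b] = [a] := List.append_inj_right' hs' rfl
          exact (List.singleton_inj.1 h3).symm
      · rintro ⟨l, ⟨hlm, hsub⟩, hlw⟩
        refine ⟨l + 1, ⟨by omega, ?_⟩, hlw⟩
        rw [hdropgen (l+1) (by omega) (by omega)]
        simp only [Nat.add_sub_cancel]
        exact hsub.trans (List.sublist_append_left _ _)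
  · -- episode iff
    intro m w hmt
    rw [key p.length m w]
    simp only [List.take_length]
    constructor
    · intro h
      refine ⟨min w m, ⟨min_le_right _ _, ?_⟩, min_le_left _ _⟩
      have h4 : m - min w m = m - w := by omega
      rw [h4]
      exact h
    · rintro ⟨l, ⟨hlm, hsub⟩, hlw⟩
      exact hsub.trans (drop_sublist_drop _ (by omega))
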